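/- Let U be an optional process with regulated trajectories that is right lower-semicontinuous along stopping times, let (δ^n) be a nonincreasing sequence of stopping times with limit δ, and let Z be an integrable random variable with Z ≥ limsup_n U_{δ^n} 1_{[δ^n < T]} and Z measurable. If additionally δ^n > δ on {δ < T} for all n along a subsequence, then E[Z 1_{[δ < T]}] ≥ E[U_{δ+} 1_{[δ < T]}] ≥ E[U_δ 1_{[δ < T]}]. -/

import Mathlib

open MeasureTheory Filter Topology Set Function

/-- `y : [0,T] → ℝ` is regulated. -/
def Regulated (T : ℝ) (y : ℝ → ℝ) : Prop :=
  (∀ t ∈ Set.Ico (0:ℝ) T, ∃ l : ℝ, Tendsto y (𝓝[>] t) (𝓝 l)) ∧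
  (∀ t ∈ Set.Ioc (0:ℝ) T, ∃ l : ℝ, Tendsto y (𝓝[<] t) (𝓝 l))

/-- If `U` is right lower-semicontinuous along stopping times, `δ^n ↓ δ` are
stopping times (with `δ^n > δ` on `{δ < T}` along a subsequence) and `Z` is integrable with
`Z ≥ limsup_n U_{δ^n} 1_{[δ^n < T]}` a.s., then
`E[Z 1_{[δ<T]}] ≥ E[U_{δ+} 1_{[δ<T]}] ≥ E[U_δ 1_{[δ<T]}]`. -/
theorem rlsc_limit_inequality {Ω : Type*} {m0 : MeasurableSpace Ω}
    (ℱ : Filtration ℝ m0) (μ : Measure Ω) [IsProbabilityMeasure μ]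
    (T : ℝ) (hT : 0 < T) (U : ℝ → Ω → ℝ)
    (hUreg : ∀ ω, Regulated T fun t => U t ω)
    (hrlsc : ∀ τ : Ω → ℝ, IsStoppingTime ℱ (fun ω => (τ ω : WithTop ℝ)) → (∀ ω, τ ω ∈ Set.Icc (0:ℝ) T) →
      ∀ τs : ℕ → Ω → ℝ, (∀ n, IsStoppingTime ℱ (fun ω => (τs n ω : WithTop ℝ))) →
        (∀ n ω, τs n ω ∈ Set.Icc (0:ℝ) T) →
        (∀ ω, Antitone fun n => τs n ω) →
        (∀ ω, Tendsto (fun n => τs n ω) atTop (𝓝 (τ ω))) →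
        ∀ᵐ ω ∂μ, U (τ ω) ω ≤ liminf (fun n => U (τs n ω) ω) atTop)
    (δn : ℕ → Ω → ℝ) (δ : Ω → ℝ)
    (hδnstop : ∀ n, IsStoppingTime ℱ (fun ω => (δn n ω : WithTop ℝ))) (hδstop : IsStoppingTime ℱ (fun ω => (δ ω : WithTop ℝ)))
    (hδnmem : ∀ n ω, δn n ω ∈ Set.Icc (0:ℝ) T) (hδmem : ∀ ω, δ ω ∈ Set.Icc (0:ℝ) T)
    (hanti : ∀ ω, Antitone fun n => δn n ω)
    (hconv : ∀ ω, Tendsto (fun n => δn n ω) atTop (𝓝 (δ ω)))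
    (Z : Ω → ℝ) (hZint : Integrable Z μ)
    (hZ : ∀ᵐ ω ∂μ,
      limsup (fun n => if δn n ω < T then U (δn n ω) ω else 0) atTop ≤ Z ω)
    (hsub : ∃ φ : ℕ → ℕ, StrictMono φ ∧ ∀ (n : ℕ) ω, δ ω < T → δ ω < δn (φ n) ω)
    (hint1 : Integrable (fun ω => rightLim (fun t => U t ω) (δ ω)) μ)
    (hint2 : Integrable (fun ω => U (δ ω) ω) μ) :
    (∫ ω in {ω | δ ω < T}, rightLim (fun t => U t ω) (δ ω) ∂μ)
        ≤ (∫ ω in {ω | δ ω < T}, Z ω ∂μ) ∧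
      (∫ ω in {ω | δ ω < T}, U (δ ω) ω ∂μ)
        ≤ ∫ ω in {ω | δ ω < T}, rightLim (fun t => U t ω) (δ ω) ∂μ := by
  obtain ⟨φ, hφ, hφδ⟩ := hsub
  have key : ∀ᵐ ω ∂μ, δ ω < T →
      U (δ ω) ω ≤ rightLim (fun t => U t ω) (δ ω) ∧
      rightLim (fun t => U t ω) (δ ω) ≤ Z ω := by
    filter_upwards [hrlsc δ hδstop hδmem δn hδnstop hδnmem hanti hconv, hZ] with ω h1 h2 hδT
    have hgt : ∀ n, δ ω < δn n ω := fun n =>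
      lt_of_lt_of_le (hφδ n ω hδT) (hanti ω (hφ.le_apply))
    obtain ⟨l, hl⟩ := (hUreg ω).1 (δ ω) ⟨(hδmem ω).1, hδT⟩
    have htend' : Tendsto (fun n => δn n ω) atTop (𝓝[>] (δ ω)) :=
      tendsto_nhdsWithin_of_tendsto_nhds_of_eventually_within _ (hconv ω)
        (Eventually.of_forall fun n => hgt n)
    have hU : Tendsto (fun n => U (δn n ω) ω) atTop (𝓝 l) := hl.comp htend'
    have hrl : rightLim (fun t => U t ω) (δ ω) = l :=
      rightLim_eq_of_tendsto hl
    have hev : ∀ᶠ n in atTop, δn n ω < T := (hconv ω).eventually_lt_const hδT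
    have hf : Tendsto (fun n => if δn n ω < T then U (δn n ω) ω else 0) atTop (𝓝 l) :=
      hU.congr' (hev.mono fun n hn => by simp [hn])
    constructor
    · rw [hrl]
      exact h1.trans_eq hU.liminf_eq
    · rw [hrl]
      exact hf.limsup_eq ▸ h2
  have hs : MeasurableSet {ω | δ ω < T} :=
    by have := hδstop.measurableSpace_le _ (hδstop.measurableSet_lt' T); simpa using this
  constructor
  · exact setIntegral_mono_ae_restrict hint1.integrableOn hZint.integrableOn
      ((ae_restrict_iff' hs).2 (key.mono fun ω h hω => (h hω).2))
  · exact setIntegral_mono_ae_restrict hint2.integrableOn hint1.integrableOn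
      ((ae_restrict_iff' hs).2 (key.mono fun ω h hω => (h hω).1))
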